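/- The function h(x̃) = log(log(1 + e^{x̃})) is concave in x̃ on ℝ; i.e., log(1+e^x) is log-concave as a function of x. -/

import Mathlib

open Real

lemma aux_pos (x : ℝ) : 0 < Real.log (1 + Real.exp x) :=
  Real.log_pos (by linarith [Real.exp_pos x])

lemma aux_ne (x : ℝ) : (1 : ℝ) + Real.exp x ≠ 0 := by positivity

/-- derivative of D x = (1+e^{-x}) log(1+e^x) -/
lemma hasDerivD (x : ℝ) :
    HasDerivAt (fun x : ℝ => (1 + Real.exp (-x)) * Real.log (1 + Real.exp x))
      (1 - Real.exp (-x) * Real.log (1 + Real.exp x)) x := by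
  have h1 : HasDerivAt (fun x : ℝ => 1 + Real.exp (-x)) (-Real.exp (-x)) x := by
    have := ((Real.hasDerivAt_exp (-x)).comp x (hasDerivAt_neg x)).const_add (1 : ℝ)
    simpa [mul_comm] using this
  have h2 : HasDerivAt (fun x : ℝ => Real.log (1 + Real.exp x))
      (Real.exp x / (1 + Real.exp x)) x := by
    have := ((Real.hasDerivAt_exp x).const_add (1 : ℝ)).log (aux_ne x)
    simpa using this
  have : HasDerivAt (fun x : ℝ => (1 + Real.exp (-x)) * Real.log (1 + Real.exp x)) _ x := h1.mul h2
  convert this using 1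
  have hne := aux_ne x
  have hx : Real.exp (-x) * Real.exp x = 1 := by
    rw [← Real.exp_add]; simp
  field_simp
  ring_nf
  nlinarith [hx]

lemma hasDerivH (x : ℝ) :
    HasDerivAt (fun x : ℝ => Real.log (Real.log (1 + Real.exp x)))
      (((1 + Real.exp (-x)) * Real.log (1 + Real.exp x))⁻¹) x := by
  have h2 : HasDerivAt (fun x : ℝ => Real.log (1 + Real.exp x))
      (Real.exp x / (1 + Real.exp x)) x := by
    have := ((Real.hasDerivAt_exp x).const_add (1 : ℝ)).log (aux_ne x)
    simpa using this
  have := h2.log (aux_pos x).ne'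
  convert this using 1
  have hne := aux_ne x
  have hL := (aux_pos x).ne'
  have hx : Real.exp (-x) * Real.exp x = 1 := by
    rw [← Real.exp_add]; simp
  rw [Real.exp_neg]
  field_simp
  ring

lemma D_mono : Monotone (fun x : ℝ => (1 + Real.exp (-x)) * Real.log (1 + Real.exp x)) := by
  apply monotone_of_deriv_nonneg
  · exact fun x => (hasDerivD x).differentiableAt
  · intro x
    rw [(hasDerivD x).deriv]
    have hlog : Real.log (1 + Real.exp x) ≤ Real.exp x := by
      have := Real.log_le_sub_one_of_pos (show (0:ℝ) < 1 + Real.exp x by positivity)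
      linarith
    have hpos := Real.exp_pos (-x)
    have : Real.exp (-x) * Real.log (1 + Real.exp x) ≤ Real.exp (-x) * Real.exp x :=
      mul_le_mul_of_nonneg_left hlog hpos.le
    rw [← Real.exp_add] at this
    simp at this
    linarith

/-- log(1+e^x) is log-concave: x ↦ log(log(1+e^x)) is concave on ℝ. -/
theorem log_log_one_add_exp_concave :
    ConcaveOn ℝ Set.univ (fun x : ℝ => Real.log (Real.log (1 + Real.exp x))) := by
  apply Antitone.concaveOn_univ_of_deriv
  · exact fun x => (hasDerivH x).differentiableAt
  · intro a b hab
    rw [(hasDerivH a).deriv, (hasDerivH b).deriv]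
    have hDa : 0 < (1 + Real.exp (-a)) * Real.log (1 + Real.exp a) := by
      have := aux_pos a; have := Real.exp_pos (-a); nlinarith
    exact inv_anti₀ hDa (D_mono hab)
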